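/- Uniqueness of the risk-neutral proportion: for fixed K_p, K_c > 0 and μ_p, μ_c > 0, if μ_c/μ_p ≠ (1 − Φ(d_p))/Φ(d_c), then there exists a ∈ ℝ with h(a) < h(r); i.e., the average gain E X_T − e^{rT}X₀ of the options portfolio is negative for some appreciation rate a. -/

import Mathlib

open MeasureTheory ProbabilityTheory Real Set

/-- Standard normal CDF. -/
noncomputable def Phi (x : ℝ) : ℝ :=
  ∫ y in Set.Iic x, (Real.sqrt (2 * Real.pi))⁻¹ * Real.exp (-(y ^ 2) / 2)

/-- Standard normal density. -/
noncomputable def phi (y : ℝ) : ℝ := (Real.sqrt (2 * Real.pi))⁻¹ * Real.exp (-(y ^ 2) / 2)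

/-- Black-Scholes d value. -/
noncomputable def dBS (S₀ K r T σ : ℝ) : ℝ :=
  (Real.log (S₀ / K) + T * (r + σ ^ 2 / 2)) / (σ * Real.sqrt T)

/-- Black-Scholes call price (closed form). -/
noncomputable def callBS (S₀ K r T σ : ℝ) : ℝ :=
  S₀ * Phi (dBS S₀ K r T σ) - K * Real.exp (-(r * T)) * Phi (dBS S₀ K r T σ - σ * Real.sqrt T)

/-- Black-Scholes put price (via put-call parity). -/
noncomputable def putBS (S₀ K r T σ : ℝ) : ℝ :=
  callBS S₀ K r T σ - S₀ + K * Real.exp (-(r * T))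

open Filter Topology
open scoped ENNReal NNReal

lemma phi_nonneg (x : ℝ) : 0 ≤ phi x := by unfold phi; positivity

lemma phi_pos (x : ℝ) : 0 < phi x := by
  have h : 0 < Real.sqrt (2 * Real.pi) := Real.sqrt_pos.2 (by positivity)
  unfold phi; positivity

lemma continuous_phi : Continuous phi := by unfold phi; fun_prop

lemma pdf_eq : gaussianPDFReal 0 1 = phi := by
  funext x
  simp [gaussianPDFReal, phi]

lemma integrable_phi : Integrable phi := pdf_eq ▸ integrable_gaussianPDFReal 0 1

lemma integral_phi : ∫ x, phi x = 1 := pdf_eq ▸ integral_gaussianPDFReal_eq_one 0 one_ne_zero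

lemma Phi_eq (x : ℝ) : Phi x = ∫ y in Set.Iic x, phi y := rfl

lemma gaussian_density : gaussianPDF 0 1 = fun x => ((phi x).toNNReal : ℝ≥0∞) := by
  funext x
  rw [gaussianPDF, pdf_eq]
  rfl

lemma integral_gauss (f : ℝ → ℝ) :
    ∫ z, f z ∂(gaussianReal 0 1) = ∫ z, phi z * f z := by
  rw [gaussianReal_of_var_ne_zero 0 one_ne_zero, gaussian_density,
    integral_withDensity_eq_integral_smul (continuous_phi.measurable.real_toNNReal)]
  congr 1; funext z
  simp [NNReal.smul_def, Real.coe_toNNReal _ (phi_nonneg z)]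

lemma integrable_gauss_iff (f : ℝ → ℝ) :
    Integrable f (gaussianReal 0 1) ↔ Integrable (fun z => phi z * f z) := by
  rw [gaussianReal_of_var_ne_zero 0 one_ne_zero, gaussian_density,
    integrable_withDensity_iff_integrable_smul (continuous_phi.measurable.real_toNNReal)]
  constructor <;> intro h <;> refine h.congr (Eventually.of_forall fun z => ?_) <;>
    simp [NNReal.smul_def, Real.coe_toNNReal _ (phi_nonneg z)]

lemma integral_gauss_set (f : ℝ → ℝ) (s : Set ℝ) (hs : MeasurableSet s) :
    ∫ z in s, f z ∂(gaussianReal 0 1) = ∫ z in s, phi z * f z := by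
  rw [← integral_indicator hs, ← integral_indicator hs, integral_gauss]
  congr 1; funext z
  by_cases h : z ∈ s <;> simp [indicator, h]

lemma phi_mul_exp (b z : ℝ) : phi z * Real.exp (b * z - b ^ 2 / 2) = phi (z - b) := by
  simp only [phi, mul_assoc, ← Real.exp_add]
  congr 1; ring

lemma integrable_expb (b : ℝ) :
    Integrable (fun z => Real.exp (b * z - b ^ 2 / 2)) (gaussianReal 0 1) := by
  rw [integrable_gauss_iff]
  simp_rw [phi_mul_exp]
  exact integrable_phi.comp_sub_right b

lemma integral_expb (b : ℝ) : ∫ z, Real.exp (b * z - b ^ 2 / 2) ∂(gaussianReal 0 1) = 1 := by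
  rw [integral_gauss]
  simp_rw [phi_mul_exp, sub_eq_add_neg]
  rw [integral_add_right_eq_self phi (-b)]
  exact integral_phi

lemma gauss_Iic (b c : ℝ) :
    ∫ z in Set.Iic c, Real.exp (b * z - b ^ 2 / 2) ∂(gaussianReal 0 1) = Phi (c - b) := by
  rw [integral_gauss_set _ _ measurableSet_Iic]
  simp_rw [phi_mul_exp]
  rw [← integral_indicator measurableSet_Iic]
  have h : (Set.Iic c).indicator (fun z => phi (z - b)) =
      fun z => (Set.Iic (c - b)).indicator phi (z + -b) := by
    funext z
    have hiff : z ∈ Set.Iic c ↔ z + -b ∈ Set.Iic (c - b) := by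
      simp only [Set.mem_Iic]; constructor <;> intro <;> linarith
    by_cases hz : z ∈ Set.Iic c
    · rw [Set.indicator_of_mem hz, Set.indicator_of_mem (hiff.1 hz), sub_eq_add_neg]
    · rw [Set.indicator_of_notMem hz, Set.indicator_of_notMem (fun hc => hz (hiff.2 hc))]
  rw [h, integral_add_right_eq_self ((Set.Iic (c - b)).indicator phi) (-b),
    integral_indicator measurableSet_Iic, Phi_eq]

lemma gauss_singleton (c : ℝ) : gaussianReal 0 1 {c} = 0 :=
  gaussianReal_absolutelyContinuous 0 one_ne_zero (measure_singleton c)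

lemma gauss_Iio (b c : ℝ) :
    ∫ z in Set.Iio c, Real.exp (b * z - b ^ 2 / 2) ∂(gaussianReal 0 1) = Phi (c - b) := by
  rw [← gauss_Iic b c]
  exact setIntegral_congr_set (Iio_ae_eq_Iic' (gauss_singleton c))

lemma gauss_Ioi (b c : ℝ) :
    ∫ z in Set.Ioi c, Real.exp (b * z - b ^ 2 / 2) ∂(gaussianReal 0 1) = 1 - Phi (c - b) := by
  have h := integral_add_compl (s := Set.Iic c) measurableSet_Iic (integrable_expb b)
    (f := fun z => Real.exp (b * z - b ^ 2 / 2)) (μ := gaussianReal 0 1)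
  rw [compl_Iic, gauss_Iic, integral_expb] at h
  linarith

lemma Phi_neg (u : ℝ) : Phi (-u) = 1 - Phi u := by
  have h1 : Phi (-u) = ∫ z in Set.Ici u, phi z := by
    rw [Phi_eq, ← integral_indicator measurableSet_Iic, ← integral_indicator measurableSet_Ici,
      ← integral_neg_eq_self ((Set.Iic (-u)).indicator phi)]
    congr 1; funext z
    have hiff : -z ∈ Set.Iic (-u) ↔ z ∈ Set.Ici u := by
      simp only [Set.mem_Iic, Set.mem_Ici]; constructor <;> intro <;> linarith
    by_cases hz : z ∈ Set.Ici u
    · rw [Set.indicator_of_mem (hiff.2 hz), Set.indicator_of_mem hz]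
      simp [phi]
    · rw [Set.indicator_of_notMem (fun hc => hz (hiff.1 hc)), Set.indicator_of_notMem hz]
  have h2 := integral_add_compl (s := Set.Iic u) measurableSet_Iic integrable_phi (f := phi) (μ := volume)
  rw [compl_Iic, integral_phi] at h2
  rw [h1, integral_Ici_eq_integral_Ioi, ← Phi_eq] at *
  linarith

lemma Phi_pos (x : ℝ) : 0 < Phi x := by
  rw [Phi_eq, setIntegral_pos_iff_support_of_nonneg_ae
    (Eventually.of_forall fun z => phi_nonneg z) integrable_phi.integrableOn]
  have hs : Function.support phi = Set.univ := by
    ext z; simp [Function.support, (phi_pos z).ne']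
  rw [hs, Set.univ_inter]
  simp [Real.volume_Iic]

lemma W_iff_lt (A K b : ℝ) (hA : 0 < A) (hK : 0 < K) (hb : 0 < b) (z : ℝ) :
    K < A * Real.exp (b * z - b ^ 2 / 2) ↔ (Real.log (K / A) + b ^ 2 / 2) / b < z := by
  rw [div_lt_iff₀ hb, show K < A * Real.exp (b * z - b ^ 2 / 2) ↔
      K / A < Real.exp (b * z - b ^ 2 / 2) by rw [div_lt_iff₀ hA]; constructor <;> intro <;> linarith [mul_comm A (Real.exp (b * z - b ^ 2 / 2))],
    ← Real.log_lt_iff_lt_exp (div_pos hK hA)]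
  constructor <;> intro <;> linarith

lemma W_iff_gt (A K b : ℝ) (hA : 0 < A) (hK : 0 < K) (hb : 0 < b) (z : ℝ) :
    A * Real.exp (b * z - b ^ 2 / 2) < K ↔ z < (Real.log (K / A) + b ^ 2 / 2) / b := by
  rw [lt_div_iff₀ hb, show A * Real.exp (b * z - b ^ 2 / 2) < K ↔
      Real.exp (b * z - b ^ 2 / 2) < K / A by rw [lt_div_iff₀ hA]; constructor <;> intro <;> linarith [mul_comm A (Real.exp (b * z - b ^ 2 / 2))],
    ← Real.lt_log_iff_exp_lt (div_pos hK hA)]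
  constructor <;> intro <;> linarith

lemma integrable_W (A b : ℝ) :
    Integrable (fun z => A * Real.exp (b * z - b ^ 2 / 2)) (gaussianReal 0 1) :=
  (integrable_expb b).const_mul A

lemma lip_aux (W K x y : ℝ) : |max (x * W - K) 0 - max (y * W - K) 0| ≤ |W| * |x - y| := by
  calc |max (x * W - K) 0 - max (y * W - K) 0| ≤ |x * W - K - (y * W - K)| :=
        abs_max_sub_max_le_abs _ _ _
    _ = |W| * |x - y| := by rw [show x * W - K - (y * W - K) = W * (x - y) by ring, abs_mul]

lemma call_deriv (A K b : ℝ) (hA : 0 < A) (hK : 0 < K) (hb : 0 < b) :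
    HasDerivAt (fun x => ∫ z, max (x * (A * Real.exp (b * z - b ^ 2 / 2)) - K) 0
        ∂(gaussianReal 0 1))
      (A * (1 - Phi ((Real.log (K / A) + b ^ 2 / 2) / b - b))) 1 := by
  set γ := gaussianReal 0 1
  set W : ℝ → ℝ := fun z => A * Real.exp (b * z - b ^ 2 / 2) with hW
  set c : ℝ := (Real.log (K / A) + b ^ 2 / 2) / b with hc
  have hWpos : ∀ z, 0 < W z := fun z => mul_pos hA (Real.exp_pos _)
  have key := hasDerivAt_integral_of_dominated_loc_of_lip
    (F := fun x z => max (x * W z - K) 0) (F' := (Set.Ioi c).indicator W)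
    (μ := γ) (x₀ := 1) (bound := W) (Metric.ball_mem_nhds 1 one_pos)
    (Eventually.of_forall fun x => (Continuous.aestronglyMeasurable (by fun_prop)))
    ?_ ?_ ?_ (integrable_W A b) ?_
  · have heq : ∫ z, (Set.Ioi c).indicator W z ∂γ = A * (1 - Phi (c - b)) := by
      rw [integral_indicator measurableSet_Ioi, hW]
      simp only []
      rw [MeasureTheory.integral_const_mul, gauss_Ioi]
    rw [heq] at key
    exact key.2
  · -- integrability of F 1
    refine (integrable_W A b).mono (Continuous.aestronglyMeasurable (by fun_prop))
      (Eventually.of_forall fun z => ?_)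
    rw [Real.norm_eq_abs, Real.norm_eq_abs, abs_of_nonneg (le_max_right _ _),
      abs_of_pos (hWpos z)]
    exact max_le (by linarith [hK, hWpos z, (le_refl (1 * W z))]) (le_of_lt (hWpos z))
  · exact ((integrable_W A b).aestronglyMeasurable).indicator measurableSet_Ioi
  · refine Eventually.of_forall fun z =>
      lipschitzOnWith_iff_dist_le_mul.2 fun x _ y _ => ?_
    rw [Real.dist_eq, Real.dist_eq, Real.coe_nnabs]
    exact lip_aux (W z) K x y
  · -- a.e. differentiability
    have hae : ∀ᵐ z ∂γ, z ≠ c := by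
      rw [ae_iff]
      convert gauss_singleton c using 2
      ext z; simp [not_not]
    filter_upwards [hae] with z hz
    rcases lt_or_gt_of_ne hz with hlt | hgt
    · -- z < c : W z < K, eventually 0
      have hWK : W z < K := (W_iff_gt A K b hA hK hb z).2 hlt
      have hev : ∀ᶠ x in 𝓝 (1 : ℝ), max (x * W z - K) 0 = 0 := by
        have h1 : (1 : ℝ) < K / W z := (lt_div_iff₀ (hWpos z)).2 (by linarith)
        filter_upwards [eventually_lt_nhds h1] with x hx
        exact max_eq_right (by nlinarith [(lt_div_iff₀ (hWpos z)).1 hx])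
      have h0 : (Set.Ioi c).indicator W z = 0 :=
        Set.indicator_of_notMem (by simpa using hlt.le) W
      rw [h0]
      exact (hasDerivAt_const (1 : ℝ) (0 : ℝ)).congr_of_eventuallyEq hev
    · -- z > c : K < W z, eventually linear
      have hWK : K < W z := (W_iff_lt A K b hA hK hb z).2 hgt
      have hev : ∀ᶠ x in 𝓝 (1 : ℝ), max (x * W z - K) 0 = x * W z - K := by
        have h1 : K / W z < 1 := (div_lt_iff₀ (hWpos z)).2 (by linarith)
        filter_upwards [eventually_gt_nhds h1] with x hx
        exact max_eq_left (by nlinarith [(div_lt_iff₀ (hWpos z)).1 hx])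
      have h0 : (Set.Ioi c).indicator W z = W z := Set.indicator_of_mem (Set.mem_Ioi.2 hgt) W
      rw [h0]
      exact ((hasDerivAt_mul_const (W z)).sub_const K).congr_of_eventuallyEq hev

lemma lip_aux' (W K x y : ℝ) : |max (K - x * W) 0 - max (K - y * W) 0| ≤ |W| * |x - y| := by
  calc |max (K - x * W) 0 - max (K - y * W) 0| ≤ |K - x * W - (K - y * W)| :=
        abs_max_sub_max_le_abs _ _ _
    _ = |W| * |x - y| := by
        rw [show K - x * W - (K - y * W) = -(W * (x - y)) by ring, abs_neg, abs_mul]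

lemma put_deriv (A K b : ℝ) (hA : 0 < A) (hK : 0 < K) (hb : 0 < b) :
    HasDerivAt (fun x => ∫ z, max (K - x * (A * Real.exp (b * z - b ^ 2 / 2))) 0
        ∂(gaussianReal 0 1))
      (-(A * Phi ((Real.log (K / A) + b ^ 2 / 2) / b - b))) 1 := by
  set γ := gaussianReal 0 1
  set W : ℝ → ℝ := fun z => A * Real.exp (b * z - b ^ 2 / 2) with hW
  set c : ℝ := (Real.log (K / A) + b ^ 2 / 2) / b with hc
  have hWpos : ∀ z, 0 < W z := fun z => mul_pos hA (Real.exp_pos _)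
  have key := hasDerivAt_integral_of_dominated_loc_of_lip
    (F := fun x z => max (K - x * W z) 0) (F' := (Set.Iio c).indicator (fun z => -W z))
    (μ := γ) (x₀ := 1) (bound := W) (Metric.ball_mem_nhds 1 one_pos)
    (Eventually.of_forall fun x => (Continuous.aestronglyMeasurable (by fun_prop)))
    ?_ ?_ ?_ (integrable_W A b) ?_
  · have heq : ∫ z, (Set.Iio c).indicator (fun z => -W z) z ∂γ = -(A * Phi (c - b)) := by
      rw [integral_indicator measurableSet_Iio, hW]
      simp only []
      rw [MeasureTheory.integral_neg, MeasureTheory.integral_const_mul, gauss_Iio]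
    rw [heq] at key
    exact key.2
  · refine (integrable_const K).mono (Continuous.aestronglyMeasurable (by fun_prop))
      (Eventually.of_forall fun z => ?_)
    rw [Real.norm_eq_abs, Real.norm_eq_abs, abs_of_nonneg (le_max_right _ _),
      abs_of_pos hK]
    exact max_le (by linarith [hWpos z]) hK.le
  · exact (((integrable_W A b).aestronglyMeasurable).neg).indicator measurableSet_Iio
  · refine Eventually.of_forall fun z =>
      lipschitzOnWith_iff_dist_le_mul.2 fun x _ y _ => ?_
    rw [Real.dist_eq, Real.dist_eq, Real.coe_nnabs]
    exact lip_aux' (W z) K x y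
  · have hae : ∀ᵐ z ∂γ, z ≠ c := by
      rw [ae_iff]
      convert gauss_singleton c using 2
      ext z; simp [not_not]
    filter_upwards [hae] with z hz
    rcases lt_or_gt_of_ne hz with hlt | hgt
    · -- z < c : W z < K, eventually linear
      have hWK : W z < K := (W_iff_gt A K b hA hK hb z).2 hlt
      have hev : ∀ᶠ x in 𝓝 (1 : ℝ), max (K - x * W z) 0 = K - x * W z := by
        have h1 : (1 : ℝ) < K / W z := (lt_div_iff₀ (hWpos z)).2 (by linarith)
        filter_upwards [eventually_lt_nhds h1] with x hx
        exact max_eq_left (by nlinarith [(lt_div_iff₀ (hWpos z)).1 hx])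
      have h0 : (Set.Iio c).indicator (fun z => -W z) z = -W z :=
        Set.indicator_of_mem (Set.mem_Iio.2 hlt) _
      rw [h0]
      exact (((hasDerivAt_mul_const (W z)).const_sub K)).congr_of_eventuallyEq hev
    · -- z > c : K < W z, eventually 0
      have hWK : K < W z := (W_iff_lt A K b hA hK hb z).2 hgt
      have hev : ∀ᶠ x in 𝓝 (1 : ℝ), max (K - x * W z) 0 = 0 := by
        have h1 : K / W z < 1 := (div_lt_iff₀ (hWpos z)).2 (by linarith)
        filter_upwards [eventually_gt_nhds h1] with x hx
        exact max_eq_right (by nlinarith [(div_lt_iff₀ (hWpos z)).1 hx])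
      have h0 : (Set.Iio c).indicator (fun z => -W z) z = 0 :=
        Set.indicator_of_notMem (by simpa using hgt.le) _
      rw [h0]
      exact (hasDerivAt_const (1 : ℝ) (0 : ℝ)).congr_of_eventuallyEq hev

lemma exists_lt_of_deriv_ne (G : ℝ → ℝ) (D : ℝ) (hG : HasDerivAt G D 1) (hD : D ≠ 0) :
    ∃ x : ℝ, 0 < x ∧ G x < G 1 := by
  have hs := hasDerivAt_iff_tendsto_slope.1 hG
  rcases hD.lt_or_gt with hneg | hpos
  · have h1 : Tendsto (slope G 1) (𝓝[>] 1) (𝓝 D) :=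
      hs.mono_left (nhdsWithin_mono 1 fun x hx => ne_of_gt hx)
    have h2 : ∀ᶠ x in 𝓝[>] (1 : ℝ), slope G 1 x < 0 := h1.eventually_lt_const hneg
    obtain ⟨x, hx1, hx2⟩ := (h2.and self_mem_nhdsWithin).exists
    have hx3 : (1 : ℝ) < x := hx2
    refine ⟨x, by linarith, ?_⟩
    rw [slope_def_field] at hx1
    rcases div_neg_iff.1 hx1 with ⟨h, h'⟩ | ⟨h, h'⟩ <;> linarith
  · have h1 : Tendsto (slope G 1) (𝓝[<] 1) (𝓝 D) :=
      hs.mono_left (nhdsWithin_mono 1 fun x hx => ne_of_lt hx)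
    have h2 : ∀ᶠ x in 𝓝[<] (1 : ℝ), slope G 1 x > 0 := h1.eventually_const_lt hpos
    have h3 : ∀ᶠ x in 𝓝[<] (1 : ℝ), (0 : ℝ) < x :=
      eventually_nhdsWithin_of_eventually_nhds (eventually_gt_nhds one_pos)
    obtain ⟨x, ⟨hx1, hx0⟩, hx2⟩ := ((h2.and h3).and self_mem_nhdsWithin).exists
    have hx3 : x < 1 := hx2
    refine ⟨x, hx0, ?_⟩
    rw [slope_def_field] at hx1
    rcases div_pos_iff.1 hx1 with ⟨h, h'⟩ | ⟨h, h'⟩ <;> linarith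

theorem stmt8 (S₀ Kp Kc σ T r μp μc : ℝ) (hS : 0 < S₀) (hKp : 0 < Kp) (hKc : 0 < Kc)
    (hσ : 0 < σ) (hT : 0 < T) (hr : 0 ≤ r) (hμp : 0 < μp) (hμc : 0 < μc)
    (h : ℝ → ℝ)
    (hh : ∀ a : ℝ, h a =
      μp * (∫ z, max (Kp - Real.exp ((a - r) * T) *
              (S₀ * Real.exp (r * T - σ ^ 2 * T / 2 + σ * Real.sqrt T * z))) 0
            ∂(gaussianReal 0 1)) +
      μc * (∫ z, max (Real.exp ((a - r) * T) *
              (S₀ * Real.exp (r * T - σ ^ 2 * T / 2 + σ * Real.sqrt T * z)) - Kc) 0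
            ∂(gaussianReal 0 1)))
    (hratio : μc / μp ≠ (1 - Phi (dBS S₀ Kp r T σ)) / Phi (dBS S₀ Kc r T σ)) :
    ∃ a : ℝ, h a < h r := by
  have hsT : 0 < Real.sqrt T := Real.sqrt_pos.2 hT
  set b : ℝ := σ * Real.sqrt T with hbdef
  have hb : 0 < b := mul_pos hσ hsT
  have hb2 : b ^ 2 = σ ^ 2 * T := by
    rw [hbdef, mul_pow, Real.sq_sqrt hT.le]
  set A : ℝ := S₀ * Real.exp (r * T) with hAdef
  have hA : 0 < A := mul_pos hS (Real.exp_pos _)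
  have hWz : ∀ z : ℝ, S₀ * Real.exp (r * T - σ ^ 2 * T / 2 + b * z)
      = A * Real.exp (b * z - b ^ 2 / 2) := by
    intro z
    rw [hAdef, mul_assoc S₀ (Real.exp (r * T)), ← Real.exp_add]
    congr 1
    rw [hb2]; ring
  set G : ℝ → ℝ := fun x =>
      μp * (∫ z, max (Kp - x * (A * Real.exp (b * z - b ^ 2 / 2))) 0 ∂(gaussianReal 0 1)) +
      μc * (∫ z, max (x * (A * Real.exp (b * z - b ^ 2 / 2)) - Kc) 0 ∂(gaussianReal 0 1))
    with hGdef
  have hhG : ∀ a : ℝ, h a = G (Real.exp ((a - r) * T)) := by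
    intro a
    rw [hh a, hGdef]
    simp only [hWz]
  have hG1 : h r = G 1 := by
    rw [hhG r]
    norm_num
  -- derivative of G at 1
  have hP := put_deriv A Kp b hA hKp hb
  have hC := call_deriv A Kc b hA hKc hb
  have hGd : HasDerivAt G
      (μp * -(A * Phi ((Real.log (Kp / A) + b ^ 2 / 2) / b - b)) +
       μc * (A * (1 - Phi ((Real.log (Kc / A) + b ^ 2 / 2) / b - b)))) 1 :=
    (hP.const_mul μp).add (hC.const_mul μc)
  have hd : ∀ K : ℝ, 0 < K →
      (Real.log (K / A) + b ^ 2 / 2) / b - b = -(dBS S₀ K r T σ) := by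
    intro K hK0
    rw [hAdef, dBS, ← hbdef, Real.log_div hK0.ne' (mul_pos hS (Real.exp_pos _)).ne',
      Real.log_mul hS.ne' (Real.exp_pos _).ne', Real.log_exp,
      Real.log_div hS.ne' hK0.ne']
    field_simp
    nlinarith [hb2, sq_nonneg b]
  rw [hd Kp hKp, hd Kc hKc, Phi_neg, Phi_neg] at hGd
  set D : ℝ := μp * -(A * (1 - Phi (dBS S₀ Kp r T σ))) +
      μc * (A * (1 - (1 - Phi (dBS S₀ Kc r T σ)))) with hDdef
  have hD : D ≠ 0 := by
    intro h0
    apply hratio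
    have hΦc : 0 < Phi (dBS S₀ Kc r T σ) := Phi_pos _
    rw [div_eq_div_iff hμp.ne' hΦc.ne']
    have : A * (μc * Phi (dBS S₀ Kc r T σ) - μp * (1 - Phi (dBS S₀ Kp r T σ))) = 0 := by
      rw [hDdef] at h0; nlinarith [h0]
    have h2 := (mul_eq_zero.1 this).resolve_left hA.ne'
    nlinarith [h2]
  obtain ⟨x, hx0, hxlt⟩ := exists_lt_of_deriv_ne G D hGd hD
  refine ⟨r + Real.log x / T, ?_⟩
  have harg : (r + Real.log x / T - r) * T = Real.log x := by
    field_simp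
    ring
  rw [hhG, harg, Real.exp_log hx0, hG1]
  exact hxlt
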